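/- General prophecy soundness: for φ = ∀π₁.∃π₂.…∀π_{2n-1}.∃π_{2n}.ψ, a prophecy family Ξ = {Ξ_{2i-1}}_{i=1}^n where each ξ ∈ Ξ_{2i-1} is an LTL formula over {π₁,…,π_{2i-1}}, and fresh prophecy variables P = {p^ξ}, one has K ⊨ φ if and only if K^P ⊨ φ^{P,Ξ}, where φ^{P,Ξ} has the same quantifier prefix and body ((X G ⋀_{i=1}^n ⋀_{ξ∈Ξ_{2i-1}} ((p^ξ)_{π_{2i-1}} ↔ ξ)) → ψ). -/

import Mathlib

/-- Syntax of LTL formulas over atomic propositions `α` (with a primitive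
`true` constant). -/
inductive LTL (α : Type) where
  | tt : LTL α
  | atom : α → LTL α
  | conj : LTL α → LTL α → LTL α
  | neg : LTL α → LTL α
  | next : LTL α → LTL α
  | untl : LTL α → LTL α → LTL α

/-- Satisfaction of an LTL formula on a trace `t : ℕ → Set α` at position `i`. -/
def LTL.sat {α : Type} (t : ℕ → Set α) : ℕ → LTL α → Prop
  | _, .tt => True
  | i, .atom a => a ∈ t i
  | i, .conj φ ψ => LTL.sat t i φ ∧ LTL.sat t i ψ
  | i, .neg φ => ¬ LTL.sat t i φ
  | i, .next φ => LTL.sat t (i + 1) φ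
  | i, .untl φ ψ =>
      ∃ k, i ≤ k ∧ LTL.sat t k ψ ∧ ∀ j, i ≤ j → j < k → LTL.sat t j φ

/-- Paths of a Kripke structure. -/
def IsKPath {St D : Type} (init : St) (κ : St → D → St) (τ : ℕ → St) : Prop :=
  τ 0 = init ∧ ∀ i, ∃ d : D, τ (i + 1) = κ (τ i) d

/-- The trace set of a Kripke structure. -/
def KTraces {St D α : Type} (init : St) (κ : St → D → St) (ℓ : St → Set α) :
    Set (ℕ → Set α) :=
  {t | ∃ τ : ℕ → St, IsKPath init κ τ ∧ ∀ i, t i = ℓ (τ i)}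

/-- Combine a list of `n` traces (for trace variables `π₁, …, π_n`, in order)
into one trace over variable-indexed atomic propositions `α × Fin n`. -/
def zipTraces {α : Type} (n : ℕ) (ts : List (ℕ → Set α)) : ℕ → Set (α × Fin n) :=
  fun k => {x | x.1 ∈ ts.getD x.2.val (fun _ => (∅ : Set α)) k}

/-- Renaming of atomic propositions in an LTL formula. -/
def LTL.map {α β : Type} (f : α → β) : LTL α → LTL β
  | .tt => .tt
  | .atom a => .atom (f a)
  | .conj φ ψ => .conj (φ.map f) (ψ.map f)
  | .neg φ => .neg (φ.map f)
  | .next φ => .next (φ.map f)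
  | .untl φ ψ => .untl (φ.map f) (ψ.map f)

/-- Derived eventually, globally, implication, biimplication, conjunction of
a list. -/
def LTL.ev {α : Type} (ψ : LTL α) : LTL α := .untl .tt ψ
def LTL.glob {α : Type} (ψ : LTL α) : LTL α := .neg (LTL.ev (.neg ψ))
def LTL.imp {α : Type} (φ ψ : LTL α) : LTL α := .neg (.conj φ (.neg ψ))
def LTL.biimp {α : Type} (φ ψ : LTL α) : LTL α := .conj (φ.imp ψ) (ψ.imp φ)
def LTL.conjList {α : Type} (l : List (LTL α)) : LTL α := l.foldr .conj .tt

/-- All atomic propositions occurring in the formula satisfy `P`. -/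
def LTL.OnlyOn {α : Type} (P : α → Prop) : LTL α → Prop
  | .tt => True
  | .atom a => P a
  | .conj φ ψ => φ.OnlyOn P ∧ ψ.OnlyOn P
  | .neg φ => φ.OnlyOn P
  | .next φ => φ.OnlyOn P
  | .untl φ ψ => φ.OnlyOn P ∧ ψ.OnlyOn P

/-- Transition function of the prophecy-extended structure `K^P`: states are
pairs of a state of `K` and a valuation of the prophecy variables; a direction
`(d, A)` moves the `K`-component along `d` and sets the prophecy valuation of
the successor to `A` (the valuation stored at the source is irrelevant, as for
the dedicated initial state). -/
def kPStep {St D P : Type} (κ : St → D → St) :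
    St × Set P → D × Set P → St × Set P :=
  fun sA dA => (κ sA.1 dA.1, dA.2)

/-- Labeling of `K^P` over `AP ⊎ P`: the original label of the `K`-component
together with the currently true prophecy variables. -/
def kPLabel {St α P : Type} (ℓ : St → Set α) : St × Set P → Set (α ⊕ P) :=
  fun sA => Sum.inl '' ℓ sA.1 ∪ Sum.inr '' sA.2

/-- Projection of a trace over `AP ⊎ P` to a trace over `AP`. -/
def projTrace {α P : Type} (t : ℕ → Set (α ⊕ P)) : ℕ → Set α :=
  fun i => {a | Sum.inl a ∈ t i}


/-- Semantics of a HyperLTL quantifier prefix (`true` = `∃`, `false` = `∀`). -/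
def hyperSat {α : Type} (Tr : Set (ℕ → Set α)) :
    List Bool → (List (ℕ → Set α) → Prop) → Prop
  | [], body => body []
  | true :: qs, body => ∃ t ∈ Tr, hyperSat Tr qs fun ts => body (t :: ts)
  | false :: qs, body => ∀ t ∈ Tr, hyperSat Tr qs fun ts => body (t :: ts)

/-- The strictly alternating prefix `∀π₁.∃π₂.…∀π_{2n-1}.∃π_{2n}`. -/
def altPrefix : ℕ → List Bool
  | 0 => []
  | n + 1 => false :: true :: altPrefix n

/-- The type of prophecy variables `p^ξ`: one for each member `ξ` of each set
`Ξ_{2i-1}` of the prophecy family (indexed here by `i : Fin n`). -/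
def ProphVar {α : Type} (n : ℕ) (Ξ : Fin n → List (LTL (α × Fin (2 * n)))) :
    Type :=
  Σ i : Fin n, Fin (Ξ i).length

/-- Embedding of original indexed atomic propositions into the
prophecy-extended alphabet. -/
def embedN {α : Type} (n : ℕ) (Ξ : Fin n → List (LTL (α × Fin (2 * n)))) :
    α × Fin (2 * n) → (α ⊕ ProphVar n Ξ) × Fin (2 * n) :=
  fun x => (Sum.inl x.1, x.2)

/-- The premise `X G ⋀_{i=1}^n ⋀_{ξ ∈ Ξ_{2i-1}} ((p^ξ)_{π_{2i-1}} ↔ ξ)`: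
each prophecy variable `p^ξ` for `ξ ∈ Ξ_{2i-1}`, read on the universally
quantified trace `π_{2i-1}` (0-indexed trace variable `2i`), holds iff the
prophecy formula `ξ` holds. -/
def prophPremiseN {α : Type} (n : ℕ)
    (Ξ : Fin n → List (LTL (α × Fin (2 * n)))) :
    LTL ((α ⊕ ProphVar n Ξ) × Fin (2 * n)) :=
  .next (LTL.glob (LTL.conjList ((List.finRange n).map fun i =>
    LTL.conjList ((List.finRange (Ξ i).length).map fun k =>
      LTL.biimp
        (.atom (Sum.inr ⟨i, k⟩, ⟨2 * i.val, by have := i.isLt; omega⟩))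
        (((Ξ i).get k).map (embedN n Ξ))))))

section Helpers

lemma getD_append_lt' {α' : Type*} (l l2 : List α') (j : ℕ) (d : α') (h : j < l.length) :
    (l ++ l2).getD j d = l.getD j d := by
  rw [List.getD_eq_getElem?_getD, List.getD_eq_getElem?_getD, List.getElem?_append_left h]

lemma getD_append_len' {α' : Type*} (l l2 : List α') (a : α') (d : α') :
    (l ++ a :: l2).getD l.length d = a := by
  rw [List.getD_eq_getElem?_getD, List.getElem?_append_right (le_refl _)]; simp

lemma sat_conjList {α : Type} (t : ℕ → Set α) (i : ℕ) (l : List (LTL α)) :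
    LTL.sat t i (LTL.conjList l) ↔ ∀ φ ∈ l, LTL.sat t i φ := by
  induction l with
  | nil => simp [LTL.conjList, LTL.sat]
  | cons a l ih =>
    simp only [LTL.conjList, List.foldr_cons, LTL.sat, List.mem_cons] at *
    constructor
    · rintro ⟨h1, h2⟩ φ (rfl | hφ); · exact h1
      exact ih.mp h2 φ hφ
    · intro h; exact ⟨h a (Or.inl rfl), ih.mpr fun φ hφ => h φ (Or.inr hφ)⟩

lemma sat_imp {α : Type} (t : ℕ → Set α) (i : ℕ) (φ ψ : LTL α) :
    LTL.sat t i (LTL.imp φ ψ) ↔ (LTL.sat t i φ → LTL.sat t i ψ) := by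
  simp only [LTL.imp, LTL.sat]; tauto

lemma sat_biimp {α : Type} (t : ℕ → Set α) (i : ℕ) (φ ψ : LTL α) :
    LTL.sat t i (LTL.biimp φ ψ) ↔ (LTL.sat t i φ ↔ LTL.sat t i ψ) := by
  simp only [LTL.biimp, LTL.imp, LTL.sat]; tauto

lemma sat_glob {α : Type} (t : ℕ → Set α) (i : ℕ) (ψ : LTL α) :
    LTL.sat t i (LTL.glob ψ) ↔ ∀ k, i ≤ k → LTL.sat t k ψ := by
  simp only [LTL.glob, LTL.ev, LTL.sat]
  constructor
  · intro h k hk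
    by_contra hc
    exact h ⟨k, hk, hc, fun _ _ _ => trivial⟩
  · rintro h ⟨k, hk, hc, -⟩
    exact hc (h k hk)

lemma sat_map' {α β : Type} (f : α → β) (φ : LTL α) (t : ℕ → Set β) :
    ∀ i, LTL.sat t i (φ.map f) ↔ LTL.sat (fun k => {a | f a ∈ t k}) i φ := by
  induction φ with
  | tt => intro i; simp [LTL.map, LTL.sat]
  | atom a => intro i; simp [LTL.map, LTL.sat]
  | conj φ ψ ih1 ih2 => intro i; simp [LTL.map, LTL.sat, ih1, ih2]
  | neg φ ih => intro i; simp [LTL.map, LTL.sat, ih]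
  | next φ ih => intro i; simp [LTL.map, LTL.sat, ih]
  | untl φ ψ ih1 ih2 => intro i; simp only [LTL.map, LTL.sat, ih1, ih2]

lemma sat_onlyOn {α : Type} (P : α → Prop) (t t' : ℕ → Set α)
    (h : ∀ k a, P a → (a ∈ t k ↔ a ∈ t' k)) :
    ∀ (φ : LTL α), φ.OnlyOn P → ∀ i, (LTL.sat t i φ ↔ LTL.sat t' i φ) := by
  intro φ
  induction φ with
  | tt => intro _ i; simp [LTL.sat]
  | atom a => intro hP i; exact h i a hP
  | conj φ ψ ih1 ih2 =>
    intro hP i; simp only [LTL.sat, ih1 hP.1, ih2 hP.2]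
  | neg φ ih => intro hP i; simp only [LTL.sat, ih hP]
  | next φ ih => intro hP i; simp only [LTL.sat, ih hP]
  | untl φ ψ ih1 ih2 =>
    intro hP i; simp only [LTL.sat, ih1 hP.1, ih2 hP.2]

lemma mem_zipTraces {α : Type} (N : ℕ) (ts : List (ℕ → Set α)) (x : α × Fin N) (k : ℕ) :
    x ∈ zipTraces N ts k ↔ x.1 ∈ ts.getD x.2.val (fun _ => (∅ : Set α)) k := Iff.rfl

lemma getD_map_proj {α P' : Type} (ts : List (ℕ → Set (α ⊕ P'))) (j k : ℕ) (a : α) :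
    a ∈ (ts.map projTrace).getD j (fun _ => (∅ : Set α)) k ↔
      Sum.inl a ∈ ts.getD j (fun _ => (∅ : Set (α ⊕ P'))) k := by
  rw [List.getD_eq_getElem?_getD, List.getD_eq_getElem?_getD, List.getElem?_map]
  cases h : ts[j]? with
  | none => simp
  | some t' => simp [projTrace]

lemma zip_pull {α : Type} {n : ℕ} {Ξ : Fin n → List (LTL (α × Fin (2 * n)))}
    (ts' : List (ℕ → Set (α ⊕ ProphVar n Ξ))) :
    (fun k => {x : α × Fin (2 * n) | embedN n Ξ x ∈ zipTraces (2 * n) ts' k}) =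
      zipTraces (2 * n) (ts'.map projTrace) := by
  funext k; ext x
  show (Sum.inl x.1 ∈ ts'.getD x.2.val (fun _ => (∅ : Set (α ⊕ ProphVar n Ξ))) k) ↔ _
  rw [mem_zipTraces]
  exact (getD_map_proj ts' x.2.val k x.1).symm

lemma sat_embed {α : Type} {n : ℕ} {Ξ : Fin n → List (LTL (α × Fin (2 * n)))}
    (ts' : List (ℕ → Set (α ⊕ ProphVar n Ξ)))
    (ξ : LTL (α × Fin (2 * n))) (j : ℕ) :
    LTL.sat (zipTraces (2 * n) ts') j (ξ.map (embedN n Ξ)) ↔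
      LTL.sat (zipTraces (2 * n) (ts'.map projTrace)) j ξ := by
  rw [sat_map', zip_pull]

lemma mem_KTraces_ext {St D α P' : Type} (init : St) (κ : St → D → St) (ℓ : St → Set α)
    (t : ℕ → Set α) (ht : t ∈ KTraces init κ ℓ) (A : ℕ → Set P') (hA : A 0 = ∅) :
    (fun j => Sum.inl '' t j ∪ Sum.inr '' A j) ∈
      KTraces ((init, (∅ : Set P'))) (kPStep κ) (kPLabel ℓ) := by
  obtain ⟨τ, ⟨h0, hstep⟩, hlab⟩ := ht
  refine ⟨fun i => (τ i, A i), ⟨by simp [h0, hA], fun i => ?_⟩, fun i => ?_⟩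
  · obtain ⟨d, hd⟩ := hstep i
    exact ⟨(d, A (i + 1)), by simp [kPStep, hd]⟩
  · simp [kPLabel, hlab]

lemma projTrace_ext {α P' : Type} (t : ℕ → Set α) (A : ℕ → Set P') :
    projTrace (fun j => Sum.inl '' t j ∪ Sum.inr '' A j) = t := by
  funext j; ext a; simp [projTrace]

lemma inr_mem_ext {α P' : Type} (t : ℕ → Set α) (A : ℕ → Set P') (p : P') (j : ℕ) :
    Sum.inr p ∈ (fun j => Sum.inl '' t j ∪ Sum.inr '' A j) j ↔ p ∈ A j := by
  simp

lemma proj_mem_KTraces {St D α P' : Type} (init : St) (κ : St → D → St) (ℓ : St → Set α)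
    (t' : ℕ → Set (α ⊕ P'))
    (ht' : t' ∈ KTraces ((init, (∅ : Set P'))) (kPStep κ) (kPLabel ℓ)) :
    projTrace t' ∈ KTraces init κ ℓ := by
  obtain ⟨τ', ⟨h0, hstep⟩, hlab⟩ := ht'
  refine ⟨fun i => (τ' i).1, ⟨congrArg Prod.fst h0, fun i => ?_⟩, fun i => ?_⟩
  · obtain ⟨d, hd⟩ := hstep i
    refine ⟨d.1, ?_⟩
    show (τ' (i + 1)).1 = κ (τ' i).1 d.1
    rw [hd]; rfl
  · ext a; simp [projTrace, hlab i, kPLabel]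

lemma hyper_forward {β γ : Type} (Tr : Set (ℕ → Set β)) (TrP : Set (ℕ → Set γ))
    (proj : (ℕ → Set γ) → ℕ → Set β)
    (hproj : ∀ t' ∈ TrP, proj t' ∈ Tr)
    (hlift : ∀ t ∈ Tr, ∃ t' ∈ TrP, proj t' = t) :
    ∀ (qs : List Bool) (B : List (ℕ → Set β) → Prop) (B' : List (ℕ → Set γ) → Prop),
      (∀ ts', B (ts'.map proj) → B' ts') → hyperSat Tr qs B → hyperSat TrP qs B' := by
  intro qs
  induction qs with
  | nil => intro B B' h hB; exact h [] hB
  | cons q qs ih =>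
    intro B B' h hB
    cases q with
    | false =>
      simp only [hyperSat] at hB ⊢
      intro t' ht'
      exact ih _ _ (fun ts' hb => h (t' :: ts') (by simpa using hb)) (hB (proj t') (hproj t' ht'))
    | true =>
      simp only [hyperSat] at hB ⊢
      obtain ⟨t, ht, hs⟩ := hB
      obtain ⟨t', ht', hpt⟩ := hlift t ht
      refine ⟨t', ht', ih _ _ (fun ts' hb => h (t' :: ts') ?_) hs⟩
      simpa [hpt] using hb

end Helpers

lemma back_aux {St D α : Type} (init : St) (κ : St → D → St) (ℓ : St → Set α)
    (n : ℕ) (ψ : LTL (α × Fin (2 * n))) (Ξ : Fin n → List (LTL (α × Fin (2 * n))))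
    (hΞ : ∀ i : Fin n, ∀ ξ ∈ Ξ i, LTL.OnlyOn (fun x => x.2.val ≤ 2 * i.val) ξ) :
    ∀ (m : ℕ) (ts' : List (ℕ → Set (α ⊕ ProphVar n Ξ))),
      ts'.length + 2 * m = 2 * n →
      (∀ (i : Fin n) (k : Fin (Ξ i).length), 2 * i.val < ts'.length → ∀ j, 1 ≤ j →
        (Sum.inr ⟨i, k⟩ ∈ ts'.getD (2 * i.val) (fun _ => ∅) j ↔
          LTL.sat (zipTraces (2 * n) (ts'.map projTrace)) j ((Ξ i).get k))) →
      hyperSat (KTraces ((init, (∅ : Set (ProphVar n Ξ)))) (kPStep κ) (kPLabel ℓ))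
        (altPrefix m)
        (fun r => LTL.sat (zipTraces (2 * n) (ts' ++ r)) 0
          (LTL.imp (prophPremiseN n Ξ) (ψ.map (embedN n Ξ)))) →
      hyperSat (KTraces init κ ℓ) (altPrefix m)
        (fun r => LTL.sat (zipTraces (2 * n) (ts'.map projTrace ++ r)) 0 ψ) := by
  intro m
  induction m with
  | zero =>
    intro ts' hlen hInv hsat
    simp only [altPrefix, hyperSat, List.append_nil] at hsat ⊢
    refine (sat_embed ts' ψ 0).mp ((sat_imp _ _ _ _).mp hsat ?_)
    show LTL.sat (zipTraces (2 * n) ts') 1 (LTL.glob _)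
    rw [sat_glob]
    intro j hj
    rw [sat_conjList]
    intro φ hφ
    simp only [List.mem_map, List.mem_finRange, true_and] at hφ
    obtain ⟨i, rfl⟩ := hφ
    rw [sat_conjList]
    intro φ hφ
    simp only [List.mem_map, List.mem_finRange, true_and] at hφ
    obtain ⟨k, rfl⟩ := hφ
    rw [sat_biimp, sat_embed]
    show (Sum.inr ⟨i, k⟩ ∈ ts'.getD (2 * i.val) (fun _ => ∅) j) ↔ _
    exact hInv i k (by omega) j hj
  | succ m ih =>
    intro ts' hlen hInv hsat
    simp only [altPrefix, hyperSat] at hsat ⊢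
    intro t ht
    let A : ℕ → Set (ProphVar n Ξ) := fun j =>
      if j = 0 then ∅ else
        {p | LTL.sat (zipTraces (2 * n) (ts'.map projTrace ++ [t])) j ((Ξ p.1).get p.2)}
    let tE : ℕ → Set (α ⊕ ProphVar n Ξ) := fun j => Sum.inl '' t j ∪ Sum.inr '' A j
    have hA0 : A 0 = ∅ := by simp [A]
    have htE : tE ∈ KTraces ((init, (∅ : Set (ProphVar n Ξ)))) (kPStep κ) (kPLabel ℓ) :=
      mem_KTraces_ext init κ ℓ t ht A hA0
    obtain ⟨t2', ht2', hs⟩ := hsat tE htE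
    refine ⟨projTrace t2', proj_mem_KTraces init κ ℓ t2' ht2', ?_⟩
    have hptE : projTrace tE = t := projTrace_ext t A
    have hmaps : (ts' ++ [tE, t2']).map projTrace
        = (ts'.map projTrace ++ [t]) ++ [projTrace t2'] := by
      simp [hptE]
    have hInv2 : ∀ (i : Fin n) (k : Fin (Ξ i).length),
        2 * i.val < (ts' ++ [tE, t2']).length → ∀ j, 1 ≤ j →
        (Sum.inr ⟨i, k⟩ ∈ (ts' ++ [tE, t2']).getD (2 * i.val) (fun _ => ∅) j ↔
          LTL.sat (zipTraces (2 * n) ((ts' ++ [tE, t2']).map projTrace)) j ((Ξ i).get k)) := by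
      intro i k hik j hj
      have hik' : 2 * i.val < ts'.length + 2 := by simpa using hik
      rcases lt_trichotomy (2 * i.val) ts'.length with hlt | heq | hgt
      · -- old index
        rw [getD_append_lt' _ _ _ _ hlt, hInv i k hlt j hj]
        refine sat_onlyOn _ _ _ ?_ _ (hΞ i _ ((Ξ i).get_mem k)) j
        intro kk x hx
        rw [mem_zipTraces, mem_zipTraces, hmaps,
          getD_append_lt' (ts'.map projTrace ++ [t]) [projTrace t2'] x.2.val _
            (by simp; omega),
          getD_append_lt' (ts'.map projTrace) [t] x.2.val _ (by simp; omega)]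
      · -- the new universal trace
        have hgetD : (ts' ++ [tE, t2']).getD (2 * i.val) (fun _ => ∅) = tE := by
          rw [heq]
          exact getD_append_len' ts' [t2'] tE _
        rw [hgetD]
        have hmem : (Sum.inr ⟨i, k⟩ ∈ tE j) ↔
            LTL.sat (zipTraces (2 * n) (ts'.map projTrace ++ [t])) j ((Ξ i).get k) := by
          have hjne : j ≠ 0 := by omega
          simp [tE, A, if_neg hjne, List.get_eq_getElem]
          constructor
          · rintro ⟨x, hx, hx2⟩
            obtain rfl := Sum.inr_injective hx2
            exact hx
          · intro h
            exact ⟨⟨i, k⟩, h, rfl⟩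
        rw [hmem]
        refine sat_onlyOn _ _ _ ?_ _ (hΞ i _ ((Ξ i).get_mem k)) j
        intro kk x hx
        rw [mem_zipTraces, mem_zipTraces, hmaps,
          getD_append_lt' (ts'.map projTrace ++ [t]) [projTrace t2'] x.2.val _
            (by simp; omega)]
      · exfalso; omega
    have key := ih (ts' ++ [tE, t2'])
      (by simp only [List.length_append, List.length_cons, List.length_nil]; omega)
      hInv2
      (by
        have hfun : (fun r => LTL.sat (zipTraces (2 * n) ((ts' ++ [tE, t2']) ++ r)) 0
            (LTL.imp (prophPremiseN n Ξ) (ψ.map (embedN n Ξ))))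
            = (fun ts => LTL.sat (zipTraces (2 * n) (ts' ++ tE :: t2' :: ts)) 0
            (LTL.imp (prophPremiseN n Ξ) (ψ.map (embedN n Ξ)))) := by
          funext r
          rw [List.append_assoc]
          rfl
        rw [hfun]
        exact hs)
    rw [hmaps] at key
    have hfun2 : (fun r => LTL.sat
          (zipTraces (2 * n) (((ts'.map projTrace ++ [t]) ++ [projTrace t2']) ++ r)) 0 ψ)
        = (fun ts => LTL.sat
          (zipTraces (2 * n) (ts'.map projTrace ++ t :: projTrace t2' :: ts)) 0 ψ) := by
      funext r
      rw [List.append_assoc, List.append_assoc]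
      rfl
    rw [hfun2] at key
    exact key

/-- general prophecy soundness: for
`φ = ∀π₁.∃π₂.…∀π_{2n-1}.∃π_{2n}.ψ`, a prophecy family `Ξ = {Ξ_{2i-1}}`
(each `ξ ∈ Ξ_{2i-1}` mentioning only `π₁, …, π_{2i-1}`) and fresh prophecy
variables `P = {p^ξ}`, we have `K ⊨ φ` iff `K^P ⊨ φ^{P,Ξ}`, where `φ^{P,Ξ}`
has the same quantifier prefix and body
`(X G ⋀_i ⋀_{ξ∈Ξ_{2i-1}} ((p^ξ)_{π_{2i-1}} ↔ ξ)) → ψ`. -/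
theorem prophecy_soundness_general {St D α : Type} (init : St)
    (κ : St → D → St) (ℓ : St → Set α) (n : ℕ)
    (ψ : LTL (α × Fin (2 * n)))
    (Ξ : Fin n → List (LTL (α × Fin (2 * n))))
    (hΞ : ∀ i : Fin n, ∀ ξ ∈ Ξ i,
      LTL.OnlyOn (fun x => x.2.val ≤ 2 * i.val) ξ) :
    hyperSat (KTraces init κ ℓ) (altPrefix n)
      (fun ts => LTL.sat (zipTraces (2 * n) ts) 0 ψ) ↔
    hyperSat
      (KTraces ((init, (∅ : Set (ProphVar n Ξ)))) (kPStep κ) (kPLabel ℓ))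
      (altPrefix n)
      (fun ts => LTL.sat (zipTraces (2 * n) ts) 0
        (LTL.imp (prophPremiseN n Ξ) (ψ.map (embedN n Ξ)))) := by
  constructor
  · intro h
    refine hyper_forward (KTraces init κ ℓ)
      (KTraces ((init, (∅ : Set (ProphVar n Ξ)))) (kPStep κ) (kPLabel ℓ)) projTrace
      (fun t' ht' => proj_mem_KTraces init κ ℓ t' ht')
      (fun t ht => ⟨_, mem_KTraces_ext init κ ℓ t ht (fun _ => ∅) rfl, projTrace_ext t _⟩)
      (altPrefix n) _ _ ?_ h
    intro ts' hb
    rw [sat_imp]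
    intro _
    exact (sat_embed ts' ψ 0).mpr hb
  · intro h
    have key := back_aux init κ ℓ n ψ Ξ hΞ n [] (by simp)
      (fun i k hik => absurd hik (by simp)) (by simpa using h)
    simpa using key
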